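/- For every natural number n, the polynomial C_n satisfies the differential identity d/dz[(1-z^2) dC_n(z)/dz] + n(n+1) C_n(z) = 2(z-1) dB_n(z)/dz + B_n(z) - 2(2n+1) R_n(z) for all real z. -/

import Mathlib

/-- The `N`-th harmonic number `H_N = ∑_{k=1}^N 1/k` (with `H_0 = 0`). -/
noncomputable def H (N : ℕ) : ℝ := ∑ k ∈ Finset.Icc 1 N, (1 : ℝ) / k

/-- The Legendre polynomial of degree `n`,
`P_n(z) = 2^{-n} ∑_{k=0}^{n} (binom(n,k))² (z-1)^{n-k} (z+1)^k`, as a function on `ℝ`. -/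
noncomputable def P (n : ℕ) (z : ℝ) : ℝ :=
  (∑ k ∈ Finset.range (n + 1), ((n.choose k : ℝ)) ^ 2 * (z - 1) ^ (n - k) * (z + 1) ^ k) / 2 ^ n

/-- `R_n(z) = 2(H_{2n} - H_n) P_n(z)
               + 2 ∑_{k=0}^{n-1} (-1)^{n+k} (2k+1)/((n-k)(n+k+1)) P_k(z)`. -/
noncomputable def R (n : ℕ) (z : ℝ) : ℝ :=
  2 * (H (2 * n) - H n) * P n z +
    2 * ∑ k ∈ Finset.range n,
      (-1 : ℝ) ^ (n + k) * (2 * (k : ℝ) + 1) / (((n : ℝ) - k) * ((n : ℝ) + k + 1)) * P k z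

/-- `B_n(z) = 4(H_{2n} - H_n) P_n(z) + 4 ∑_{k=0}^{n-1} (2k+1)/((n-k)(n+k+1)) P_k(z)`. -/
noncomputable def B (n : ℕ) (z : ℝ) : ℝ :=
  4 * (H (2 * n) - H n) * P n z +
    4 * ∑ k ∈ Finset.range n,
      (2 * (k : ℝ) + 1) / (((n : ℝ) - k) * ((n : ℝ) + k + 1)) * P k z

/-- The coefficient `c_{nk}` for `0 ≤ k ≤ n-1`. -/
noncomputable def c (n k : ℕ) : ℝ :=
  (-1 : ℝ) ^ (n + k) * (8 * (2 * (k : ℝ) + 1) / (((n : ℝ) - k) * ((n : ℝ) + k + 1))) *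
      (H (n + k) - H (n - k) - H ((n + k) / 2) + H ((n - k) / 2))
    - 4 * (2 * (k : ℝ) + 1) ^ 2 / (((n : ℝ) - k) ^ 2 * ((n : ℝ) + k + 1) ^ 2)
    - (-1 : ℝ) ^ (n + k) * (4 * (2 * (n : ℝ) + 1) * (2 * (k : ℝ) + 1)) /
        (((n : ℝ) - k) ^ 2 * ((n : ℝ) + k + 1) ^ 2)

/-- The diagonal coefficient
`c_{nn} = 4(H_{2n}-H_n)² - 4 ∑_{k=1}^{2n} 1/k² + 2 ∑_{k=1}^{n} 1/k²`. -/
noncomputable def cnn (n : ℕ) : ℝ :=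
  4 * (H (2 * n) - H n) ^ 2
    - 4 * (∑ k ∈ Finset.Icc 1 (2 * n), (1 : ℝ) / (k : ℝ) ^ 2)
    + 2 * (∑ k ∈ Finset.Icc 1 n, (1 : ℝ) / (k : ℝ) ^ 2)

/-- `C_n(z) = ∑_{k=0}^{n} c_{nk} P_k(z)` (with `c_{nn}` given by `cnn`). -/
noncomputable def C (n : ℕ) (z : ℝ) : ℝ :=
  (∑ k ∈ Finset.range n, c n k * P k z) + cnn n * P n z




/-- homogeneous combination of (X-1)^(m-j) (X+1)^j -/
noncomputable def hom (f : ℕ → ℝ) (m : ℕ) : Polynomial ℝ :=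
  ∑ j ∈ Finset.range (m+1),
    Polynomial.C (f j) * (Polynomial.X - 1)^(m - j) * (Polynomial.X + 1)^j

/-- shift of a coefficient sequence -/
def shf (f : ℕ → ℝ) : ℕ → ℝ := fun j => match j with | 0 => 0 | i+1 => f i

lemma hom_congr {f g : ℕ → ℝ} {m : ℕ} (h : ∀ j ≤ m, f j = g j) : hom f m = hom g m := by
  unfold hom
  refine Finset.sum_congr rfl fun j hj => ?_
  rw [h j (Nat.lt_succ_iff.mp (Finset.mem_range.mp hj))]

lemma hom_mul_addX (f : ℕ → ℝ) (m : ℕ) :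
    (Polynomial.X + 1) * hom f m = hom (shf f) (m+1) := by
  unfold hom
  rw [Finset.mul_sum, Finset.sum_range_succ' (fun j => Polynomial.C (shf f j) *
    (Polynomial.X - 1)^(m + 1 - j) * (Polynomial.X + 1)^j) (m+1)]
  simp only [shf, Polynomial.C_0, zero_mul, add_zero]
  refine Finset.sum_congr rfl fun j hj => ?_
  have hjm : j ≤ m := Nat.lt_succ_iff.mp (Finset.mem_range.mp hj)
  have : m + 1 - (j + 1) = m - j := by omega
  rw [this]; ring

lemma hom_mul_subX (f : ℕ → ℝ) (m : ℕ) (hf : f (m+1) = 0) :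
    (Polynomial.X - 1) * hom f m = hom f (m+1) := by
  unfold hom
  rw [Finset.mul_sum, Finset.sum_range_succ (fun j => Polynomial.C (f j) *
    (Polynomial.X - 1)^(m + 1 - j) * (Polynomial.X + 1)^j) (m+1)]
  rw [hf]
  simp only [Polynomial.C_0, zero_mul, add_zero]
  refine Finset.sum_congr rfl fun j hj => ?_
  have hjm : j ≤ m := Nat.lt_succ_iff.mp (Finset.mem_range.mp hj)
  have : m + 1 - j = (m - j) + 1 := by omega
  rw [this]; ring

lemma deriv_term (a : ℝ) (aa bb : ℕ) :
    Polynomial.derivative (Polynomial.C a * (Polynomial.X - 1)^aa * (Polynomial.X + 1)^bb)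
    = Polynomial.C (a * aa) * (Polynomial.X - 1)^(aa-1) * (Polynomial.X + 1)^bb
      + Polynomial.C (a * bb) * (Polynomial.X - 1)^aa * (Polynomial.X + 1)^(bb-1) := by
  rw [mul_assoc, Polynomial.derivative_C_mul, Polynomial.derivative_mul,
    Polynomial.derivative_pow, Polynomial.derivative_pow]
  simp only [Polynomial.derivative_sub, Polynomial.derivative_add, Polynomial.derivative_X,
    Polynomial.derivative_one, sub_zero, add_zero, mul_one, Polynomial.C_mul]
  ring

lemma hom_deriv (f : ℕ → ℝ) (m : ℕ) :
    Polynomial.derivative (hom f (m+1))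
    = hom (fun j => ((m:ℝ)+1-j) * f j + ((j:ℝ)+1) * f (j+1)) m := by
  unfold hom
  rw [map_sum]
  have key : ∀ j ∈ Finset.range (m+2),
      Polynomial.derivative (Polynomial.C (f j) * (Polynomial.X - 1)^(m+1-j) * (Polynomial.X + 1)^j)
      = Polynomial.C (f j * (m+1-j : ℕ)) * (Polynomial.X - 1)^(m+1-j-1) * (Polynomial.X + 1)^j
        + Polynomial.C (f j * j) * (Polynomial.X - 1)^(m+1-j) * (Polynomial.X + 1)^(j-1) := by
    intro j _; exact deriv_term (f j) (m+1-j) j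
  rw [Finset.sum_congr rfl key, Finset.sum_add_distrib]
  have h1 : ∑ j ∈ Finset.range (m+2), Polynomial.C (f j * (m+1-j : ℕ)) *
      (Polynomial.X - 1)^(m+1-j-1) * (Polynomial.X + 1)^j
      = ∑ j ∈ Finset.range (m+1), Polynomial.C (((m:ℝ)+1-j) * f j) *
        (Polynomial.X - 1)^(m-j) * (Polynomial.X + 1)^j := by
    rw [Finset.sum_range_succ]
    have : (m + 1 - (m+1) : ℕ) = 0 := by omega
    rw [this]
    simp only [Nat.cast_zero, mul_zero, Polynomial.C_0, zero_mul, add_zero]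
    refine Finset.sum_congr rfl fun j hj => ?_
    have hjm : j ≤ m := Nat.lt_succ_iff.mp (Finset.mem_range.mp hj)
    have e1 : m + 1 - j - 1 = m - j := by omega
    have e2 : ((m + 1 - j : ℕ) : ℝ) = (m:ℝ) + 1 - j := by
      rw [Nat.cast_sub (by omega)]; push_cast; ring
    rw [e1, e2, mul_comm (f j)]
  have h2 : ∑ j ∈ Finset.range (m+2), Polynomial.C (f j * j) *
      (Polynomial.X - 1)^(m+1-j) * (Polynomial.X + 1)^(j-1)
      = ∑ j ∈ Finset.range (m+1), Polynomial.C (((j:ℝ)+1) * f (j+1)) *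
        (Polynomial.X - 1)^(m-j) * (Polynomial.X + 1)^j := by
    rw [Finset.sum_range_succ' (fun j => Polynomial.C (f j * j) *
      (Polynomial.X - 1)^(m+1-j) * (Polynomial.X + 1)^(j-1)) (m+1)]
    simp only [Nat.cast_zero, mul_zero, Polynomial.C_0, zero_mul, add_zero]
    refine Finset.sum_congr rfl fun j hj => ?_
    have hjm : j ≤ m := Nat.lt_succ_iff.mp (Finset.mem_range.mp hj)
    have e1 : m + 1 - (j+1) = m - j := by omega
    have e2 : (j + 1) - 1 = j := by omega
    rw [e1, e2]
    push_cast
    rw [mul_comm (f (j+1))]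
  rw [h1, h2, ← Finset.sum_add_distrib]
  refine Finset.sum_congr rfl fun j hj => ?_
  rw [Polynomial.C_add]
  ring

lemma hom_sub (f g : ℕ → ℝ) (m : ℕ) : hom f m - hom g m = hom (fun j => f j - g j) m := by
  unfold hom
  rw [← Finset.sum_sub_distrib]
  refine Finset.sum_congr rfl fun j hj => ?_
  rw [Polynomial.C_sub]; ring

lemma hom_add' (f g : ℕ → ℝ) (m : ℕ) : hom f m + hom g m = hom (fun j => f j + g j) m := by
  unfold hom
  rw [← Finset.sum_add_distrib]
  refine Finset.sum_congr rfl fun j hj => ?_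
  rw [Polynomial.C_add]; ring

lemma C_mul_hom (a : ℝ) (f : ℕ → ℝ) (m : ℕ) :
    Polynomial.C a * hom f m = hom (fun j => a * f j) m := by
  unfold hom
  rw [Finset.mul_sum]
  refine Finset.sum_congr rfl fun j hj => ?_
  rw [Polynomial.C_mul]; ring

/-- 2 * hom f m = hom (shf f - f) (m+1), needs f (m+1) = 0 -/
lemma hom_two (f : ℕ → ℝ) (m : ℕ) (hf : f (m+1) = 0) :
    (2 : Polynomial ℝ) * hom f m = hom (fun j => shf f j - f j) (m+1) := by
  have h2 : (2 : Polynomial ℝ) = (Polynomial.X + 1) - (Polynomial.X - 1) := by ring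
  rw [h2, sub_mul, hom_mul_addX, hom_mul_subX f m hf, hom_sub]

/-- cast of binomial coefficient -/
noncomputable def ch (n j : ℕ) : ℝ := (n.choose j : ℝ)

lemma ch_zero (n j : ℕ) (h : n < j) : ch n j = 0 := by
  simp [ch, Nat.choose_eq_zero_of_lt h]

lemma rel1 (n j : ℕ) : ((j:ℝ)+1) * ch n (j+1) = ((n:ℝ) - j) * ch n j := by
  rcases le_or_gt (j+1) n with h | h
  · have := Nat.choose_succ_right_eq n j
    have hc : ((n.choose (j+1) * (j+1) : ℕ) : ℝ) = ((n.choose j * (n - j) : ℕ) : ℝ) := by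
      exact_mod_cast congrArg (Nat.cast (R := ℝ)) this
    push_cast [Nat.cast_sub (by omega : j ≤ n)] at hc
    unfold ch; linarith
  · rcases Nat.lt_or_ge n j with h2 | h2
    · rw [ch_zero n (j+1) (by omega), ch_zero n j h2]; ring
    · have : n = j := by omega
      subst this
      rw [ch_zero n (n+1) (by omega)]
      simp

noncomputable def q (n : ℕ) : Polynomial ℝ := hom (fun j => ch n j ^ 2) n

lemma q_zero : q 0 = 1 := by
  simp [q, hom, ch]

/-- The Legendre ODE at the `q` level. -/
lemma ode_q (n : ℕ) :
    Polynomial.derivative ((1 - Polynomial.X^2) * Polynomial.derivative (q n))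
    = Polynomial.C (-((n:ℝ) * ((n:ℝ)+1))) * q n := by
  cases n with
  | zero => simp [q_zero]
  | succ m =>
    set n := m + 1
    set f : ℕ → ℝ := fun j => ch n j ^ 2 with hf
    set b : ℕ → ℝ := fun j => ((m:ℝ)+1-j) * f j + ((j:ℝ)+1) * f (j+1) with hb
    have hd : Polynomial.derivative (q n) = hom b m := hom_deriv f m
    have hbm1 : b (m+1) = 0 := by
      simp only [hb, hf]
      rw [ch_zero n (m+2) (by omega)]
      push_cast; ring
    have hsplit : ((1 : Polynomial ℝ) - Polynomial.X^2) = -((Polynomial.X - 1) * (Polynomial.X + 1)) := by ring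
    have step : ((1 : Polynomial ℝ) - Polynomial.X^2) * Polynomial.derivative (q n)
        = -(hom (shf b) (m+2)) := by
      rw [hd, hsplit]
      have : (Polynomial.X - 1) * ((Polynomial.X + 1) * hom b m) = hom (shf b) (m+2) := by
        rw [hom_mul_addX, hom_mul_subX (shf b) (m+1) (by simpa [shf] using hbm1)]
      rw [← this]; ring
    rw [step, map_neg, hom_deriv]
    rw [show Polynomial.C (-((n:ℝ) * ((n:ℝ)+1))) * q n
      = -(Polynomial.C ((n:ℝ) * ((n:ℝ)+1)) * q n) by rw [map_neg]; ring]
    rw [q, C_mul_hom]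
    congr 1
    apply hom_congr
    intro j hj
    rcases j with _ | i
    · -- j = 0
      simp only [shf, hb, hf]
      push_cast
      have hch0 : ch n 0 = 1 := by simp [ch]
      have hch1 : ch n 1 = (m:ℝ)+1 := by
        simp only [ch, Nat.choose_one_right, n]; push_cast; ring
      rw [hch0, hch1]; push_cast [n]; ring
    · -- j = i+1
      simp only [shf, hb, hf]
      push_cast
      have r1 := rel1 n i
      have r2 := rel1 n (i+1)
      push_cast at r1 r2
      rw [show (n:ℝ) = (m:ℝ)+1 by push_cast [n]; ring] at r1 r2 ⊢
      linear_combination (-((((i:ℝ)+1) * ch n (i+1)) + (((m:ℝ)+1-i) * ch n i))) * r1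
        + ((((i:ℝ)+1+1) * ch n (i+1+1)) + (((m:ℝ)-i) * ch n (i+1))) * r2

lemma q_one : q 1 = 2 * Polynomial.X := by
  simp [q, hom, ch, Finset.sum_range_succ]
  ring

/-- E1 at q level: (X-1)(q_{m+1}' + 2 q_m') = (m+1)(q_{m+1} - 2 q_m) -/
lemma E1_q (m : ℕ) :
    (Polynomial.X - 1) * (Polynomial.derivative (q (m+1)) + 2 * Polynomial.derivative (q m))
    = Polynomial.C ((m:ℝ)+1) * (q (m+1) - 2 * q m) := by
  cases m with
  | zero =>
    rw [q_one, q_zero]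
    simp
    ring
  | succ t =>
    set m := t + 1
    set n := m + 1
    set fn : ℕ → ℝ := fun j => ch n j ^ 2 with hfn
    set fm : ℕ → ℝ := fun j => ch m j ^ 2 with hfm
    set b : ℕ → ℝ := fun j => ((m:ℝ)+1-j) * fn j + ((j:ℝ)+1) * fn (j+1) with hb
    set d : ℕ → ℝ := fun j => ((t:ℝ)+1-j) * fm j + ((j:ℝ)+1) * fm (j+1) with hd
    have hdm : Polynomial.derivative (q m) = hom d t := hom_deriv fm t
    have hdn : Polynomial.derivative (q n) = hom b m := hom_deriv fn m
    have hdt1 : d (t+1) = 0 := by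
      simp only [hd, hfm]
      rw [ch_zero m (t+2) (by omega)]
      push_cast; ring
    have h2d : (2:Polynomial ℝ) * Polynomial.derivative (q m)
        = hom (fun j => shf d j - d j) m := by
      rw [hdm, hom_two d t hdt1]
    -- inner sum
    have hin : Polynomial.derivative (q (m+1)) + 2 * Polynomial.derivative (q m)
        = hom (fun j => b j + (shf d j - d j)) m := by
      rw [hdn, h2d, hom_add']
    have htop : b (m+1) + (shf d (m+1) - d (m+1)) = 0 := by
      have h1 : b (m+1) = 0 := by
        simp only [hb, hfn]
        rw [ch_zero n (m+2) (by omega)]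
        push_cast; ring
      have h2 : d (m+1) = 0 := by
        simp only [hd, hfm]
        rw [ch_zero m (m+1) (by omega), ch_zero m (m+2) (by omega)]
        push_cast [m]; ring
      have h3 : shf d (m+1) = d m := rfl
      have h4 : d m = 0 := by
        simp only [hd, hfm]
        rw [ch_zero m (m+1) (by omega)]
        push_cast [m]; ring
      rw [h1, h2, h3, h4]; ring
    have hL : (Polynomial.X - 1) * (Polynomial.derivative (q (m+1)) + 2 * Polynomial.derivative (q m))
        = hom (fun j => b j + (shf d j - d j)) (m+1) := by
      rw [hin, hom_mul_subX _ m htop]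
    -- right side
    have hfm1 : fm (m+1) = 0 := by
      simp only [hfm]; rw [ch_zero m (m+1) (by omega)]; ring
    have h2q : (2:Polynomial ℝ) * q m = hom (fun j => shf fm j - fm j) (m+1) := by
      rw [q, hom_two fm m hfm1]
    have hR : Polynomial.C ((m:ℝ)+1) * (q (m+1) - 2 * q m)
        = hom (fun j => ((m:ℝ)+1) * (fn j - (shf fm j - fm j))) (m+1) := by
      rw [q, h2q, hom_sub, C_mul_hom]
    rw [hL, hR]
    apply hom_congr
    intro j hj
    rcases j with _ | i
    · -- j = 0
      simp only [shf, hb, hd, hfn, hfm]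
      have c0n : ch n 0 = 1 := by simp [ch]
      have c0m : ch m 0 = 1 := by simp [ch]
      have c1n : ch n 1 = (m:ℝ)+1 := by
        simp only [ch, Nat.choose_one_right, n]; push_cast; ring
      have c1m : ch m 1 = (t:ℝ)+1 := by
        simp only [ch, Nat.choose_one_right, m]; push_cast; ring
      rw [c0n, c0m, c1n, c1m]
      have : (m:ℝ) = (t:ℝ)+1 := by push_cast [m]; ring
      rw [this]; push_cast; ring
    · -- j = i+1
      simp only [shf, hb, hd, hfn, hfm]
      have hPas1 : ch n (i+1) = ch m (i+1) + ch m i := by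
        simp only [ch, n, Nat.choose_succ_succ]; push_cast; ring
      have hPas2 : ch n (i+1+1) = ch m (i+1+1) + ch m (i+1) := by
        simp only [ch, n, Nat.choose_succ_succ]; push_cast; ring
      have r1 := rel1 m i
      have r2 := rel1 m (i+1)
      have hmt : (m:ℝ) = (t:ℝ)+1 := by push_cast [m]; ring
      rw [hPas1, hPas2, hmt]
      push_cast at r1 r2 ⊢
      rw [hmt] at r1 r2
      linear_combination ((-2:ℝ) * ch m i) * r1 + ((2:ℝ) * ch m (i+1)) * r2

noncomputable def pl (n : ℕ) : Polynomial ℝ := Polynomial.C (((2:ℝ)^n)⁻¹) * q n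

lemma ode_pl (n : ℕ) :
    Polynomial.derivative ((1 - Polynomial.X^2) * Polynomial.derivative (pl n))
    = Polynomial.C (-((n:ℝ) * ((n:ℝ)+1))) * pl n := by
  unfold pl
  rw [Polynomial.derivative_C_mul, mul_left_comm, Polynomial.derivative_C_mul, ode_q]
  ring

lemma E1_pl (m : ℕ) :
    (Polynomial.X - 1) * (Polynomial.derivative (pl (m+1)) + Polynomial.derivative (pl m))
    = Polynomial.C ((m:ℝ)+1) * (pl (m+1) - pl m) := by
  have key := E1_q m
  have h2 : pl m = Polynomial.C (((2:ℝ)^(m+1))⁻¹) * (2 * q m) := by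
    unfold pl
    rw [show ((2:ℝ)^(m+1))⁻¹ = ((2:ℝ)^m)⁻¹ * 2⁻¹ by rw [pow_succ]; ring]
    rw [map_mul]
    have : Polynomial.C ((2:ℝ)⁻¹) * (2 * q m) = q m := by
      rw [show (2 : Polynomial ℝ) = Polynomial.C (2:ℝ) from (map_ofNat Polynomial.C 2).symm,
        ← mul_assoc, ← map_mul]
      norm_num
    rw [mul_assoc, this]
  have h1 : pl (m+1) = Polynomial.C (((2:ℝ)^(m+1))⁻¹) * q (m+1) := rfl
  rw [h1, h2, Polynomial.derivative_C_mul, Polynomial.derivative_C_mul]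
  calc (Polynomial.X - 1) * (Polynomial.C (((2:ℝ)^(m+1))⁻¹) * Polynomial.derivative (q (m+1))
        + Polynomial.C (((2:ℝ)^(m+1))⁻¹) * Polynomial.derivative (2 * q m))
      = Polynomial.C (((2:ℝ)^(m+1))⁻¹) * ((Polynomial.X - 1) *
          (Polynomial.derivative (q (m+1)) + 2 * Polynomial.derivative (q m))) := by
        rw [Polynomial.derivative_mul]
        simp only [Polynomial.derivative_ofNat]
        ring
    _ = Polynomial.C (((2:ℝ)^(m+1))⁻¹) * (Polynomial.C ((m:ℝ)+1) * (q (m+1) - 2 * q m)) := by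
        rw [key]
    _ = Polynomial.C ((m:ℝ)+1) * (Polynomial.C (((2:ℝ)^(m+1))⁻¹) * q (m+1)
          - Polynomial.C (((2:ℝ)^(m+1))⁻¹) * (2 * q m)) := by ring

lemma pl_zero : pl 0 = 1 := by
  simp [pl, q_zero]

/-- M-expansion: 2(X-1) pl_k' + pl_k = (2k+1) pl_k + 2 ∑_{j<k} (-1)^{k+j}(2j+1) pl_j -/
lemma Mexp (k : ℕ) :
    2 * (Polynomial.X - 1) * Polynomial.derivative (pl k) + pl k
    = Polynomial.C (2*(k:ℝ)+1) * pl k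
      + 2 * ∑ j ∈ Finset.range k, Polynomial.C ((-1:ℝ)^(k+j) * (2*(j:ℝ)+1)) * pl j := by
  induction k with
  | zero => simp [pl_zero]
  | succ k ih =>
    have hE := E1_pl k
    have hT : ∑ j ∈ Finset.range (k+1), Polynomial.C ((-1:ℝ)^(k+1+j) * (2*(j:ℝ)+1)) * pl j
        = - (Polynomial.C (2*(k:ℝ)+1) * pl k)
          - ∑ j ∈ Finset.range k, Polynomial.C ((-1:ℝ)^(k+j) * (2*(j:ℝ)+1)) * pl j := by
      rw [Finset.sum_range_succ]
      have h1 : ∀ j, ((-1:ℝ)^(k+1+j) * (2*(j:ℝ)+1)) = -((-1:ℝ)^(k+j) * (2*(j:ℝ)+1)) := by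
        intro j
        rw [show k+1+j = (k+j)+1 by omega, pow_succ]
        ring
      have h2 : ∑ j ∈ Finset.range k, Polynomial.C ((-1:ℝ)^(k+1+j) * (2*(j:ℝ)+1)) * pl j
          = - ∑ j ∈ Finset.range k, Polynomial.C ((-1:ℝ)^(k+j) * (2*(j:ℝ)+1)) * pl j := by
        rw [← Finset.sum_neg_distrib]
        refine Finset.sum_congr rfl fun j hj => ?_
        rw [h1 j, map_neg]; ring
      rw [h2]
      have h3 : ((-1:ℝ)^(k+1+k) * (2*(k:ℝ)+1)) = -(2*(k:ℝ)+1) := by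
        have hodd : Odd (k+1+k) := ⟨k, by omega⟩
        rw [Odd.neg_one_pow hodd]; ring
      rw [h3, map_neg]
      push_cast
      ring
    rw [hT]
    push_cast
    simp only [Polynomial.C_add, Polynomial.C_mul, map_ofNat, Polynomial.C_1] at hE ih ⊢
    linear_combination (2:Polynomial ℝ) * hE - ih

lemma H_succ (M : ℕ) : H (M+1) = H M + 1/((M:ℝ)+1) := by
  unfold H
  rw [Finset.sum_Icc_succ_top (by omega : 1 ≤ M+1)]
  push_cast; ring

lemma H_zero : H 0 = 0 := by simp [H]

/-- key harmonic identity -/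
lemma KH (n : ℕ) : ∀ d j : ℕ, j + d = n →
    H (n+j) - H (n-j) - H ((n+j)/2) + H ((n-j)/2)
    = (H (2*n) - H n) + ∑ k ∈ Finset.Ico j n,
        (-1:ℝ)^(n+k) * ((2*(k:ℝ)+1) / (((n:ℝ)-k) * ((n:ℝ)+k+1))) := by
  intro d
  induction d with
  | zero =>
    intro j hj
    have hjn : j = n := by omega
    rw [hjn, show n + n = 2*n by omega, show n - n = 0 by omega,
      show (2*n)/2 = n by omega, show (0:ℕ)/2 = 0 by omega, H_zero,
      Finset.Ico_self, Finset.sum_empty]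
    ring
  | succ d ih =>
    intro j hj
    have hjn : j < n := by omega
    have ihj := ih (j+1) (by omega)
    rw [Finset.sum_eq_sum_Ico_succ_bot hjn]
    have hxpos : (0:ℝ) < (n:ℝ) - j := by
      have : (j:ℝ) < n := by exact_mod_cast hjn
      linarith
    have hx : ((n:ℝ) - j) ≠ 0 := ne_of_gt hxpos
    have hy : ((n:ℝ) + j + 1) ≠ 0 := by positivity
    -- rewrite H (n+(j+1)) in ihj
    have hH1 : H (n+(j+1)) = H (n+j) + 1/((n:ℝ)+j+1) := by
      rw [show n+(j+1) = (n+j)+1 by omega, H_succ]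
      push_cast; ring
    -- rewrite H (n-j) in goal
    have hH2 : H (n-j) = H (n-(j+1)) + 1/((n:ℝ)-j) := by
      rw [show n-j = (n-(j+1))+1 by omega, H_succ]
      rw [Nat.cast_sub (by omega : j+1 ≤ n)]
      push_cast; ring_nf
    rcases Nat.even_or_odd (n + j) with ⟨a, ha⟩ | ⟨a, ha⟩
    · -- even case
      have hsign : (-1:ℝ)^(n+j) = 1 := Even.neg_one_pow ⟨a, ha⟩
      have hH3 : H ((n+(j+1))/2) = H ((n+j)/2) := by
        rw [show (n+(j+1))/2 = (n+j)/2 by omega]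
      have hc4 : ((((n-(j+1))/2 : ℕ)):ℝ) + 1 = ((n:ℝ)-j)/2 := by
        have h1 : (2*((n-(j+1))/2 + 1) : ℕ) = n - j := by omega
        have h2 := congrArg (Nat.cast (R:=ℝ)) h1
        rw [Nat.cast_sub (by omega : j ≤ n)] at h2
        push_cast at h2
        linarith
      have hH4 : H ((n-j)/2) = H ((n-(j+1))/2) + 2/((n:ℝ)-j) := by
        rw [show (n-j)/2 = ((n-(j+1))/2)+1 by omega, H_succ, hc4]
        rw [show (1:ℝ)/(((n:ℝ)-j)/2) = 2/((n:ℝ)-j) by rw [one_div_div]]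
      rw [hH1, hH3] at ihj
      have hS' : (∑ k ∈ Finset.Ico (j+1) n,
          (-1:ℝ)^(n+k) * ((2*(k:ℝ)+1) / (((n:ℝ)-k) * ((n:ℝ)+k+1))))
          = H (n+j) + 1/((n:ℝ)+j+1) - H (n-(j+1)) - H ((n+j)/2) + H ((n-(j+1))/2)
            - (H (2*n) - H n) := by linarith [ihj]
      rw [hS', hH2, hH4, hsign]
      field_simp
      ring
    · -- odd case
      have hsign : (-1:ℝ)^(n+j) = -1 := Odd.neg_one_pow ⟨a, by omega⟩
      have hc3 : (((n+j)/2 : ℕ):ℝ) + 1 = ((n:ℝ)+j+1)/2 := by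
        have h1 : (2*((n+j)/2 + 1) : ℕ) = n + j + 1 := by omega
        have h2 := congrArg (Nat.cast (R:=ℝ)) h1
        push_cast at h2
        linarith
      have hH3 : H ((n+(j+1))/2) = H ((n+j)/2) + 2/((n:ℝ)+j+1) := by
        rw [show (n+(j+1))/2 = ((n+j)/2)+1 by omega, H_succ, hc3]
        rw [show (1:ℝ)/(((n:ℝ)+j+1)/2) = 2/((n:ℝ)+j+1) by rw [one_div_div]]
      have hH4 : H ((n-j)/2) = H ((n-(j+1))/2) := by
        rw [show (n-j)/2 = (n-(j+1))/2 by omega]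
      rw [hH1, hH3] at ihj
      have hS' : (∑ k ∈ Finset.Ico (j+1) n,
          (-1:ℝ)^(n+k) * ((2*(k:ℝ)+1) / (((n:ℝ)-k) * ((n:ℝ)+k+1))))
          = H (n+j) + 1/((n:ℝ)+j+1) - H (n-(j+1))
            - (H ((n+j)/2) + 2/((n:ℝ)+j+1)) + H ((n-(j+1))/2)
            - (H (2*n) - H n) := by linarith [ihj]
      rw [hS', hH2, hH4, hsign]
      field_simp
      ring

lemma P_eval (n : ℕ) (z : ℝ) : P n z = (pl n).eval z := by
  unfold P pl q hom
  rw [Polynomial.eval_mul, Polynomial.eval_C, Polynomial.eval_finset_sum, div_eq_inv_mul]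
  congr 1
  refine Finset.sum_congr rfl fun j hj => ?_
  simp [ch]

noncomputable def CP (n : ℕ) : Polynomial ℝ :=
  (∑ k ∈ Finset.range n, Polynomial.C (c n k) * pl k) + Polynomial.C (cnn n) * pl n

noncomputable def bb (n k : ℕ) : ℝ := (2*(k:ℝ)+1) / (((n:ℝ)-k)*((n:ℝ)+k+1))

noncomputable def BP (n : ℕ) : Polynomial ℝ :=
  Polynomial.C (4*(H (2*n) - H n)) * pl n
    + ∑ k ∈ Finset.range n, Polynomial.C (4*bb n k) * pl k

noncomputable def RP (n : ℕ) : Polynomial ℝ :=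
  Polynomial.C (2*(H (2*n) - H n)) * pl n
    + ∑ k ∈ Finset.range n, Polynomial.C (2*((-1:ℝ)^(n+k) * bb n k)) * pl k

lemma C_eq (n : ℕ) : C n = fun z => (CP n).eval z := by
  funext z
  unfold C CP
  rw [Polynomial.eval_add, Polynomial.eval_finset_sum, Polynomial.eval_mul, Polynomial.eval_C]
  rw [P_eval]
  congr 1
  refine Finset.sum_congr rfl fun k hk => ?_
  rw [Polynomial.eval_mul, Polynomial.eval_C, P_eval]

lemma B_eq (n : ℕ) : B n = fun z => (BP n).eval z := by
  funext z
  unfold B BP bb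
  rw [Polynomial.eval_add, Polynomial.eval_finset_sum, Polynomial.eval_mul, Polynomial.eval_C]
  rw [P_eval, Finset.mul_sum]
  rw [show (4*(H (2*n) - H n)) * (pl n).eval z = 4 * (H (2*n) - H n) * (pl n).eval z by ring]
  congr 1
  refine Finset.sum_congr rfl fun k hk => ?_
  rw [Polynomial.eval_mul, Polynomial.eval_C, P_eval]
  ring

lemma R_eq (n : ℕ) : R n = fun z => (RP n).eval z := by
  funext z
  unfold R RP bb
  rw [Polynomial.eval_add, Polynomial.eval_finset_sum, Polynomial.eval_mul, Polynomial.eval_C]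
  rw [P_eval, Finset.mul_sum]
  rw [show (2*(H (2*n) - H n)) * (pl n).eval z = 2 * (H (2*n) - H n) * (pl n).eval z by ring]
  congr 1
  refine Finset.sum_congr rfl fun k hk => ?_
  rw [Polynomial.eval_mul, Polynomial.eval_C, P_eval]
  ring

lemma hterm (a : ℝ) (k : ℕ) :
    Polynomial.derivative ((1 - Polynomial.X^2) *
      Polynomial.derivative (Polynomial.C a * pl k))
    = Polynomial.C (a * (-((k:ℝ)*((k:ℝ)+1)))) * pl k := by
  rw [Polynomial.derivative_C_mul, mul_left_comm, Polynomial.derivative_C_mul, ode_pl]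
  rw [map_mul]
  ring

lemma LHS_eq (n : ℕ) :
    Polynomial.derivative ((1 - Polynomial.X^2) * Polynomial.derivative (CP n))
      + Polynomial.C ((n:ℝ)*((n:ℝ)+1)) * CP n
    = ∑ k ∈ Finset.range n,
        Polynomial.C (c n k * ((n:ℝ)*((n:ℝ)+1) - (k:ℝ)*((k:ℝ)+1))) * pl k := by
  unfold CP
  set nn := (n:ℝ)*((n:ℝ)+1) with hnn
  rw [map_add, map_sum, mul_add (1 - Polynomial.X^2), Finset.mul_sum, map_add, map_sum]
  rw [Finset.sum_congr rfl (fun k _ => hterm (c n k) k), hterm (cnn n) n]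
  rw [mul_add (Polynomial.C nn), Finset.mul_sum]
  have hcancel : Polynomial.C (cnn n * -((n:ℝ)*((n:ℝ)+1))) * pl n
      + Polynomial.C nn * (Polynomial.C (cnn n) * pl n) = 0 := by
    rw [map_mul, map_neg, hnn]
    ring
  have hmerge : ∀ k ∈ Finset.range n,
      Polynomial.C (c n k * -((k:ℝ)*((k:ℝ)+1))) * pl k
        + Polynomial.C nn * (Polynomial.C (c n k) * pl k)
      = Polynomial.C (c n k * (nn - (k:ℝ)*((k:ℝ)+1))) * pl k := by
    intro k _
    simp only [map_mul, map_sub, map_neg]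
    ring
  rw [add_add_add_comm, ← Finset.sum_add_distrib, hcancel, add_zero]
  exact Finset.sum_congr rfl hmerge

lemma swap_sum (n : ℕ) (g : ℕ → ℕ → Polynomial ℝ) :
    ∑ k ∈ Finset.range n, ∑ j ∈ Finset.range k, g k j
    = ∑ j ∈ Finset.range n, ∑ k ∈ Finset.Ico (j+1) n, g k j := by
  induction n with
  | zero => simp
  | succ n ih =>
    rw [Finset.sum_range_succ, ih]
    rw [Finset.sum_range_succ (fun j => ∑ k ∈ Finset.Ico (j+1) (n+1), g k j)]
    rw [Finset.Ico_self, Finset.sum_empty, add_zero, ← Finset.sum_add_distrib]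
    refine Finset.sum_congr rfl fun j hj => ?_
    have hjn : j + 1 ≤ n := Finset.mem_range.mp hj
    rw [Finset.sum_Ico_succ_top hjn]

lemma CmulT (a : ℝ) (s : ℕ → ℝ) (m : ℕ) :
    Polynomial.C a * ∑ j ∈ Finset.range m, Polynomial.C (s j) * pl j
    = ∑ j ∈ Finset.range m, Polynomial.C (a * s j) * pl j := by
  rw [Finset.mul_sum]
  refine Finset.sum_congr rfl fun j _ => ?_
  rw [map_mul]; ring

lemma sumC_mul (s : ℕ → ℝ) (F : Finset ℕ) (j : ℕ) :
    ∑ k ∈ F, Polynomial.C (s k) * pl j = Polynomial.C (∑ k ∈ F, s k) * pl j := by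
  rw [map_sum, Finset.sum_mul]

noncomputable def ee (n j : ℕ) : ℝ :=
  2*(4*(H (2*n) - H n)) * ((-1:ℝ)^(n+j) * (2*(j:ℝ)+1))
  + (4*bb n j)*(2*(j:ℝ)+1)
  + (∑ k ∈ Finset.Ico (j+1) n, 2*(4*bb n k) * ((-1:ℝ)^(k+j) * (2*(j:ℝ)+1)))
  - 2*(2*(n:ℝ)+1)*(2*((-1:ℝ)^(n+j) * bb n j))

lemma RHS_eq (n : ℕ) :
    2 * (Polynomial.X - 1) * Polynomial.derivative (BP n) + BP n
      - Polynomial.C (2*(2*(n:ℝ)+1)) * RP n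
    = ∑ j ∈ Finset.range n, Polynomial.C (ee n j) * pl j := by
  set T : ℕ → Polynomial ℝ := fun k => ∑ j ∈ Finset.range k,
    Polynomial.C ((-1:ℝ)^(k+j) * (2*(j:ℝ)+1)) * pl j with hT
  have hM : ∀ (a : ℝ) (k : ℕ),
      2 * (Polynomial.X-1) * Polynomial.derivative (Polynomial.C a * pl k)
        + Polynomial.C a * pl k
      = Polynomial.C (a*(2*(k:ℝ)+1)) * pl k + Polynomial.C (2*a) * T k := by
    intro a k
    rw [Polynomial.derivative_C_mul]
    calc 2 * (Polynomial.X-1) * (Polynomial.C a * Polynomial.derivative (pl k))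
          + Polynomial.C a * pl k
        = Polynomial.C a * (2 * (Polynomial.X-1) * Polynomial.derivative (pl k) + pl k) := by
          ring
      _ = Polynomial.C a * (Polynomial.C (2*(k:ℝ)+1) * pl k + 2 * T k) := by rw [Mexp k]
      _ = Polynomial.C (a*(2*(k:ℝ)+1)) * pl k + Polynomial.C (2*a) * T k := by
          simp only [map_mul, map_ofNat]; ring
  have hBP : 2 * (Polynomial.X-1) * Polynomial.derivative (BP n) + BP n
      = (Polynomial.C ((4*(H (2*n) - H n))*(2*(n:ℝ)+1)) * pl n
          + Polynomial.C (2*(4*(H (2*n) - H n))) * T n)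
        + ∑ k ∈ Finset.range n,
            (Polynomial.C ((4*bb n k)*(2*(k:ℝ)+1)) * pl k
              + Polynomial.C (2*(4*bb n k)) * T k) := by
    unfold BP
    rw [map_add, map_sum, mul_add (2 * (Polynomial.X-1) : Polynomial ℝ), Finset.mul_sum,
      add_add_add_comm, ← Finset.sum_add_distrib]
    rw [hM (4*(H (2*n) - H n)) n]
    exact congrArg _ (Finset.sum_congr rfl fun k _ => hM (4*bb n k) k)
  have hRP : Polynomial.C (2*(2*(n:ℝ)+1)) * RP n
      = Polynomial.C (2*(2*(n:ℝ)+1)*(2*(H (2*n) - H n))) * pl n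
        + ∑ k ∈ Finset.range n,
            Polynomial.C (2*(2*(n:ℝ)+1)*(2*((-1:ℝ)^(n+k) * bb n k))) * pl k := by
    unfold RP
    rw [mul_add (Polynomial.C (2*(2*(n:ℝ)+1))), CmulT]
    congr 1
    rw [← mul_assoc, ← map_mul]
  have hTn : Polynomial.C (2*(4*(H (2*n) - H n))) * T n
      = ∑ j ∈ Finset.range n,
          Polynomial.C (2*(4*(H (2*n) - H n)) * ((-1:ℝ)^(n+j) * (2*(j:ℝ)+1))) * pl j :=
    CmulT _ _ n
  have hdouble : ∑ k ∈ Finset.range n, Polynomial.C (2*(4*bb n k)) * T k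
      = ∑ j ∈ Finset.range n,
          Polynomial.C (∑ k ∈ Finset.Ico (j+1) n,
            2*(4*bb n k) * ((-1:ℝ)^(k+j) * (2*(j:ℝ)+1))) * pl j := by
    calc ∑ k ∈ Finset.range n, Polynomial.C (2*(4*bb n k)) * T k
        = ∑ k ∈ Finset.range n, ∑ j ∈ Finset.range k,
            Polynomial.C (2*(4*bb n k) * ((-1:ℝ)^(k+j) * (2*(j:ℝ)+1))) * pl j :=
          Finset.sum_congr rfl fun k _ => CmulT _ _ k
      _ = ∑ j ∈ Finset.range n, ∑ k ∈ Finset.Ico (j+1) n,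
            Polynomial.C (2*(4*bb n k) * ((-1:ℝ)^(k+j) * (2*(j:ℝ)+1))) * pl j :=
          swap_sum n _
      _ = _ := Finset.sum_congr rfl fun j _ => sumC_mul _ _ j
  rw [hBP, hRP, Finset.sum_add_distrib, hTn, hdouble]
  have hzero : Polynomial.C ((4*(H (2*n) - H n))*(2*(n:ℝ)+1)) * pl n
      - Polynomial.C (2*(2*(n:ℝ)+1)*(2*(H (2*n) - H n))) * pl n = 0 := by
    rw [show (4*(H (2*n) - H n))*(2*(n:ℝ)+1) = 2*(2*(n:ℝ)+1)*(2*(H (2*n) - H n)) by ring]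
    ring
  calc (Polynomial.C ((4*(H (2*n) - H n))*(2*(n:ℝ)+1)) * pl n
        + ∑ j ∈ Finset.range n,
            Polynomial.C (2*(4*(H (2*n) - H n)) * ((-1:ℝ)^(n+j) * (2*(j:ℝ)+1))) * pl j)
      + (∑ k ∈ Finset.range n, Polynomial.C ((4*bb n k)*(2*(k:ℝ)+1)) * pl k
        + ∑ j ∈ Finset.range n, Polynomial.C (∑ k ∈ Finset.Ico (j+1) n,
            2*(4*bb n k) * ((-1:ℝ)^(k+j) * (2*(j:ℝ)+1))) * pl j)
      - (Polynomial.C (2*(2*(n:ℝ)+1)*(2*(H (2*n) - H n))) * pl n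
        + ∑ k ∈ Finset.range n,
            Polynomial.C (2*(2*(n:ℝ)+1)*(2*((-1:ℝ)^(n+k) * bb n k))) * pl k)
      = (Polynomial.C ((4*(H (2*n) - H n))*(2*(n:ℝ)+1)) * pl n
          - Polynomial.C (2*(2*(n:ℝ)+1)*(2*(H (2*n) - H n))) * pl n)
        + ((∑ j ∈ Finset.range n,
            Polynomial.C (2*(4*(H (2*n) - H n)) * ((-1:ℝ)^(n+j) * (2*(j:ℝ)+1))) * pl j
          + ∑ k ∈ Finset.range n, Polynomial.C ((4*bb n k)*(2*(k:ℝ)+1)) * pl k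
          + ∑ j ∈ Finset.range n, Polynomial.C (∑ k ∈ Finset.Ico (j+1) n,
              2*(4*bb n k) * ((-1:ℝ)^(k+j) * (2*(j:ℝ)+1))) * pl j)
          - ∑ k ∈ Finset.range n,
              Polynomial.C (2*(2*(n:ℝ)+1)*(2*((-1:ℝ)^(n+k) * bb n k))) * pl k) := by
        ring
    _ = (∑ j ∈ Finset.range n,
            Polynomial.C (2*(4*(H (2*n) - H n)) * ((-1:ℝ)^(n+j) * (2*(j:ℝ)+1))) * pl j
          + ∑ k ∈ Finset.range n, Polynomial.C ((4*bb n k)*(2*(k:ℝ)+1)) * pl k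
          + ∑ j ∈ Finset.range n, Polynomial.C (∑ k ∈ Finset.Ico (j+1) n,
              2*(4*bb n k) * ((-1:ℝ)^(k+j) * (2*(j:ℝ)+1))) * pl j)
          - ∑ k ∈ Finset.range n,
              Polynomial.C (2*(2*(n:ℝ)+1)*(2*((-1:ℝ)^(n+k) * bb n k))) * pl k := by
        rw [hzero, zero_add]
    _ = ∑ j ∈ Finset.range n, Polynomial.C (ee n j) * pl j := by
        rw [← Finset.sum_add_distrib, ← Finset.sum_add_distrib, ← Finset.sum_sub_distrib]
        refine Finset.sum_congr rfl fun j _ => ?_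
        unfold ee
        simp only [map_add, map_sub]
        ring

lemma neg_one_pow_add_add (n j k : ℕ) :
    ((-1:ℝ))^(n+j) * (-1:ℝ)^(n+k) = (-1:ℝ)^(k+j) := by
  rw [← pow_add, show n+j+(n+k) = 2*n+(k+j) by omega, pow_add, pow_mul, neg_one_sq, one_pow,
    one_mul]

lemma coeff_eq (n j : ℕ) (hj : j < n) :
    c n j * ((n:ℝ)*((n:ℝ)+1) - (j:ℝ)*((j:ℝ)+1)) = ee n j := by
  have hxpos : (0:ℝ) < (n:ℝ) - j := by
    have : (j:ℝ) < n := by exact_mod_cast hj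
    linarith
  have hx : ((n:ℝ) - j) ≠ 0 := ne_of_gt hxpos
  have hy : ((n:ℝ) + j + 1) ≠ 0 := by positivity
  have hkh := KH n (n - j) j (by omega)
  rw [Finset.sum_eq_sum_Ico_succ_bot hj] at hkh
  have hsum : (∑ k ∈ Finset.Ico (j+1) n,
      2*(4*((2*(k:ℝ)+1) / (((n:ℝ)-k) * ((n:ℝ)+k+1)))) * ((-1:ℝ)^(k+j) * (2*(j:ℝ)+1)))
      = 8*(2*(j:ℝ)+1)*(-1:ℝ)^(n+j) * (∑ k ∈ Finset.Ico (j+1) n,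
          (-1:ℝ)^(n+k) * ((2*(k:ℝ)+1) / (((n:ℝ)-k) * ((n:ℝ)+k+1)))) := by
    rw [Finset.mul_sum]
    refine Finset.sum_congr rfl fun k _ => ?_
    rw [show 8*(2*(j:ℝ)+1)*(-1:ℝ)^(n+j) * ((-1:ℝ)^(n+k) * ((2*(k:ℝ)+1) / (((n:ℝ)-k) * ((n:ℝ)+k+1))))
      = ((-1:ℝ)^(n+j) * (-1:ℝ)^(n+k)) * (8*(2*(j:ℝ)+1)) * ((2*(k:ℝ)+1) / (((n:ℝ)-k) * ((n:ℝ)+k+1)))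
      by ring, neg_one_pow_add_add]
    ring
  unfold c ee bb
  rw [hkh, hsum]
  rcases Nat.even_or_odd (n+j) with he | ho
  · rw [Even.neg_one_pow he]
    field_simp
    ring
  · rw [Odd.neg_one_pow ho]
    field_simp
    ring

lemma main_poly (n : ℕ) :
    Polynomial.derivative ((1 - Polynomial.X^2) * Polynomial.derivative (CP n))
      + Polynomial.C ((n:ℝ)*((n:ℝ)+1)) * CP n
    = 2 * (Polynomial.X - 1) * Polynomial.derivative (BP n) + BP n
      - Polynomial.C (2*(2*(n:ℝ)+1)) * RP n := by
  rw [LHS_eq, RHS_eq]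
  refine Finset.sum_congr rfl fun j hj => ?_
  rw [coeff_eq n j (Finset.mem_range.mp hj)]


/-- For every natural number `n` and all real `z`,
`d/dz[(1-z²) C_n'(z)] + n(n+1) C_n(z) = 2(z-1) B_n'(z) + B_n(z) - 2(2n+1) R_n(z)`. -/
theorem C_differential_identity (n : ℕ) (z : ℝ) :
    deriv (fun z => (1 - z ^ 2) * deriv (C n) z) z + (n : ℝ) * ((n : ℝ) + 1) * C n z =
      2 * (z - 1) * deriv (B n) z + B n z - 2 * (2 * (n : ℝ) + 1) * R n z := by
  simp only [C_eq, B_eq, R_eq]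
  have hCd : deriv (fun w => (CP n).eval w) = fun w => (Polynomial.derivative (CP n)).eval w :=
    funext fun w => Polynomial.deriv _
  have hBd : deriv (fun w => (BP n).eval w) = fun w => (Polynomial.derivative (BP n)).eval w :=
    funext fun w => Polynomial.deriv _
  rw [hCd, hBd]
  have h2 : (fun z => (1 - z^2) * Polynomial.eval z (Polynomial.derivative (CP n)))
      = fun z => Polynomial.eval z ((1 - Polynomial.X^2) * Polynomial.derivative (CP n)) := by
    funext w
    simp
  rw [h2, Polynomial.deriv]
  have key := congrArg (Polynomial.eval z) (main_poly n)
  simp only [Polynomial.eval_add, Polynomial.eval_mul, Polynomial.eval_sub, Polynomial.eval_C,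
    Polynomial.eval_pow, Polynomial.eval_one, Polynomial.eval_X, Polynomial.eval_ofNat] at key
  linarith [key]
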